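/- Let Ω ⊆ ℝ^n be a closed sign-free symmetric convex set, x ∈ ℝ^n, and y a projection of x onto Ω. Then (|y|_i - |y|_j)(|x|_i - |x|_j) ≥ 0 for all indices i, j, where |·| denotes componentwise absolute value. -/

import Mathlib

open scoped RealInnerProductSpace

noncomputable section

/-- Euclidean space ℝ^n. -/
abbrev E (n : ℕ) := EuclideanSpace ℝ (Fin n)

/-- Support of a vector, as a finset. -/
def spt {n : ℕ} (x : E n) : Finset (Fin n) := Finset.univ.filter (fun i => x i ≠ 0)

/-- A set is symmetric if it is invariant under coordinate permutations. -/
def IsSymmSet {n : ℕ} (X : Set (E n)) : Prop :=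
  ∀ x ∈ X, ∀ σ : Equiv.Perm (Fin n), (WithLp.toLp 2 (fun i => x (σ i)) : E n) ∈ X

/-- A set is sign-free symmetric if it is symmetric and invariant under sign flips. -/
def IsSignFreeSymmSet {n : ℕ} (X : Set (E n)) : Prop :=
  IsSymmSet X ∧ ∀ x ∈ X, ∀ ε : Fin n → ℝ, (∀ i, ε i = 1 ∨ ε i = -1) →
    (WithLp.toLp 2 (fun i => ε i * x i) : E n) ∈ X

/-- A set is nonnegative symmetric if it is symmetric and contained in ℝ^n_+. -/
def IsNonnegSymmSet {n : ℕ} (X : Set (E n)) : Prop :=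
  IsSymmSet X ∧ ∀ x ∈ X, ∀ i, 0 ≤ x i

/-- `y` is a (Euclidean) projection of `x` onto `X`. -/
def IsProj {n : ℕ} (X : Set (E n)) (x y : E n) : Prop :=
  y ∈ X ∧ ∀ z ∈ X, ‖y - x‖ ≤ ‖z - x‖

/-- The set of s-sparse vectors. -/
def Cs (n s : ℕ) : Set (E n) := {x | (spt x).card ≤ s}

/-- Squared Euclidean norm as a sum of squares. -/
lemma normsq_eq_sum {n : ℕ} (v : E n) : ‖v‖ ^ 2 = ∑ k, (v k) ^ 2 := by
  rw [EuclideanSpace.norm_eq, Real.sq_sqrt (by positivity)]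
  simp [sq_abs]

theorem stmt2 {n : ℕ} (Ω : Set (E n)) (hcl : IsClosed Ω) (hsf : IsSignFreeSymmSet Ω)
    (hconv : Convex ℝ Ω) (x y : E n) (hy : IsProj Ω x y) :
    ∀ i j : Fin n, (|y i| - |y j|) * (|x i| - |x j|) ≥ 0 := by
  intro i j
  rcases eq_or_ne i j with rfl | hij
  · simp
  obtain ⟨hyΩ, hymin⟩ := hy
  obtain ⟨hsym, hflip⟩ := hsf
  -- sign vectors
  set ε1 : Fin n → ℝ := fun k => if 0 ≤ y k then 1 else -1 with hε1
  set ε2 : Fin n → ℝ := fun k => if 0 ≤ x k then 1 else -1 with hε2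
  have hε1pm : ∀ k, ε1 k = 1 ∨ ε1 k = -1 := by
    intro k; by_cases h : 0 ≤ y k <;> simp [hε1, h]
  have hε2pm : ∀ k, ε2 k = 1 ∨ ε2 k = -1 := by
    intro k; by_cases h : 0 ≤ x k <;> simp [hε2, h]
  have hε1y : ∀ k, ε1 k * y k = |y k| := by
    intro k
    by_cases h : 0 ≤ y k
    · simp [hε1, h, abs_of_nonneg h]
    · push_neg at h
      simp [hε1, not_le.mpr h, abs_of_neg h]
  have hε2x : ∀ k, ε2 k * x k = |x k| := by
    intro k
    by_cases h : 0 ≤ x k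
    · simp [hε2, h, abs_of_nonneg h]
    · push_neg at h
      simp [hε2, not_le.mpr h, abs_of_neg h]
  have hε2sq : ∀ k, ε2 k * ε2 k = 1 := by
    intro k; rcases hε2pm k with h | h <;> rw [h] <;> norm_num
  set σ : Equiv.Perm (Fin n) := Equiv.swap i j with hσ
  -- construct z ∈ Ω
  have hv1 : (WithLp.toLp 2 (fun k => ε1 k * y k) : E n) ∈ Ω := hflip y hyΩ ε1 hε1pm
  have hv2 : (WithLp.toLp 2 (fun k => ε1 (σ k) * y (σ k)) : E n) ∈ Ω :=
    hsym _ hv1 σ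
  set z : E n := WithLp.toLp 2 (fun k => ε2 k * (ε1 (σ k) * y (σ k))) with hz
  have hzΩ : z ∈ Ω := hflip _ hv2 ε2 hε2pm
  have hzk : ∀ k, z k = ε2 k * |y (σ k)| := by
    intro k
    show ε2 k * (ε1 (σ k) * y (σ k)) = ε2 k * |y (σ k)|
    rw [hε1y]
  -- minimality
  have h0 : ‖y - x‖ ≤ ‖z - x‖ := hymin z hzΩ
  have h1 : ‖y - x‖ ^ 2 ≤ ‖z - x‖ ^ 2 := by
    have := norm_nonneg (y - x)
    nlinarith [norm_nonneg (z - x)]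
  have hny : ‖y - x‖ ^ 2 = ∑ k, (y k - x k) ^ 2 := by
    rw [normsq_eq_sum]; congr 1
  have hnz : ‖z - x‖ ^ 2 = ∑ k, (z k - x k) ^ 2 := by
    rw [normsq_eq_sum]; congr 1
  -- termwise bound
  have hterm : ∀ k, (z k - x k) ^ 2 - (y k - x k) ^ 2 ≤
      (|y (σ k)| - |x k|) ^ 2 - (|y k| - |x k|) ^ 2 := by
    intro k
    have h1 := hzk k
    have h2 := hε2x k
    have h3 := hε2sq k
    have h4 : x k * y k ≤ |x k| * |y k| := by
      calc x k * y k ≤ |x k * y k| := le_abs_self _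
        _ = |x k| * |y k| := abs_mul _ _
    have h5 : (x k) ^ 2 = |x k| ^ 2 := (sq_abs _).symm
    have h6 : (y k) ^ 2 = |y k| ^ 2 := (sq_abs _).symm
    have hz2 : (z k - x k) ^ 2 = (|y (σ k)| - |x k|) ^ 2 := by
      have hring : (ε2 k * |y (σ k)| - x k) ^ 2 =
          (ε2 k * ε2 k) * |y (σ k)| ^ 2 - 2 * (ε2 k * x k) * |y (σ k)| + x k ^ 2 := by
        ring
      rw [h1, hring, h3, h2, h5]; ring
    have hy2 : (|y k| - |x k|) ^ 2 ≤ (y k - x k) ^ 2 := by nlinarith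
    linarith
  have hsum : ∑ k, ((z k - x k) ^ 2 - (y k - x k) ^ 2) ≤
      ∑ k, ((|y (σ k)| - |x k|) ^ 2 - (|y k| - |x k|) ^ 2) :=
    Finset.sum_le_sum fun k _ => hterm k
  -- evaluate the right sum
  have hσi : σ i = j := Equiv.swap_apply_left i j
  have hσj : σ j = i := Equiv.swap_apply_right i j
  have hσk : ∀ k, k ≠ i → k ≠ j → σ k = k := fun k h1 h2 =>
    Equiv.swap_apply_of_ne_of_ne h1 h2
  have heval : ∑ k, ((|y (σ k)| - |x k|) ^ 2 - (|y k| - |x k|) ^ 2)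
      = 2 * ((|y i| - |y j|) * (|x i| - |x j|)) := by
    rw [Finset.sum_eq_add_of_mem i j (Finset.mem_univ i) (Finset.mem_univ j) hij
      (by intro k _ hk; rw [hσk k hk.1 hk.2]; ring)]
    rw [hσi, hσj]; ring
  have hfin : ‖z - x‖ ^ 2 - ‖y - x‖ ^ 2 ≤ 2 * ((|y i| - |y j|) * (|x i| - |x j|)) := by
    rw [hny, hnz, ← Finset.sum_sub_distrib] at *
    rw [← heval]
    exact hsum
  linarith
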